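/- Fix $\lambda \in \mathbb{R}$, $\kappa < 0$, $A > 0$, and constants $C_+ \in \mathbb{R}$. Define $h_+(X) = \frac{1}{\kappa}\log(A-X) + C_+$ for $X \in (0,A)$, and define recursively $a_0^+(X) = e^{i\lambda h_+(X)}$ and $a_n^+(X) = e^{i\lambda h_+(X)} \int_X^A \int_Y^A e^{-2i\lambda h_+(Y)} e^{i\lambda h_+(T)} a_{n-1}^+(T)\, dT\, dY$. Then for all $n \ge 0$, $a_n^+(X) = e^{i\lambda C_+} \cdot \frac{\Gamma(1-\nu)}{2^{2n}\,\Gamma(n+1-\nu)\, n!} \, (A-X)^{2n + i\lambda/\kappa}$, where $\nu = \frac12 - \frac{i\lambda}{\kappa}$. -/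

import Mathlib

open Real Set MeasureTheory Complex

lemma key_integral (A X : ℝ) (hXA : X < A) (s : ℂ) (hs : 0 ≤ s.re) :
    ∫ t in Ioo X A, ((A - t : ℝ) : ℂ) ^ s = ((A - X : ℝ) : ℂ) ^ (s + 1) / (s + 1) := by
  have hne : s + 1 ≠ 0 := by
    intro h
    apply_fun Complex.re at h
    simp at h
    linarith
  have h1 : (∫ t in Ioo X A, ((A - t : ℝ) : ℂ) ^ s)
      = ∫ t in X..A, ((A - t : ℝ) : ℂ) ^ s := by
    rw [intervalIntegral.integral_of_le hXA.le, integral_Ioc_eq_integral_Ioo]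
  rw [h1, intervalIntegral.integral_comp_sub_left (fun u : ℝ => ((u : ℝ) : ℂ) ^ s) A,
    sub_self, integral_cpow (Or.inl (by linarith))]
  rw [Complex.ofReal_zero, Complex.zero_cpow hne, sub_zero]

lemma exp_aff (κ Cp : ℝ) (c : ℂ) (r : ℝ) (hr : 0 < r) :
    Complex.exp (c * ((1 / κ * Real.log r + Cp : ℝ) : ℂ)) =
      Complex.exp (c * (Cp : ℂ)) * (r : ℂ) ^ (c / (κ : ℂ)) := by
  rw [Complex.cpow_def_of_ne_zero (by exact_mod_cast hr.ne'), ← Complex.ofReal_log hr.le,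
    ← Complex.exp_add]
  congr 1
  push_cast
  ring

theorem model_coefficients_formula
    (lam κ A Cp : ℝ) (hκ : κ < 0) (hA : 0 < A)
    (hplus : ℝ → ℝ) (hhp : ∀ X ∈ Ioo 0 A, hplus X = (1 / κ) * Real.log (A - X) + Cp)
    (ap : ℕ → ℝ → ℂ)
    (h0 : ∀ X ∈ Ioo 0 A, ap 0 X = Complex.exp (Complex.I * (lam : ℂ) * (hplus X : ℂ)))
    (hrec : ∀ n : ℕ, ∀ X ∈ Ioo 0 A, ap (n + 1) X =
      Complex.exp (Complex.I * (lam : ℂ) * (hplus X : ℂ)) *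
        ∫ Y in Ioo X A, ∫ T in Ioo Y A,
          Complex.exp (-2 * Complex.I * (lam : ℂ) * (hplus Y : ℂ)) *
            Complex.exp (Complex.I * (lam : ℂ) * (hplus T : ℂ)) * ap n T) :
    ∀ n : ℕ, ∀ X ∈ Ioo 0 A,
      ap n X = Complex.exp (Complex.I * (lam : ℂ) * (Cp : ℂ)) *
        (Complex.Gamma (1 - (1 / 2 - Complex.I * (lam : ℂ) / (κ : ℂ))) /
          (2 ^ (2 * n) *
            Complex.Gamma ((n : ℂ) + 1 - (1 / 2 - Complex.I * (lam : ℂ) / (κ : ℂ))) *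
            (n.factorial : ℂ))) *
        ((A - X : ℝ) : ℂ) ^ ((2 * n : ℂ) + Complex.I * (lam : ℂ) / (κ : ℂ)) := by
  set μ : ℂ := Complex.I * (lam : ℂ) / (κ : ℂ) with hμ
  set ν : ℂ := 1 / 2 - μ with hν
  set E : ℂ := Complex.exp (Complex.I * (lam : ℂ) * (Cp : ℂ)) with hE
  clear_value μ ν E
  have hμre : μ.re = 0 := by
    have h : μ = ((lam / κ : ℝ) : ℂ) * Complex.I := by rw [hμ]; push_cast; ring
    simp [h]
  have hνre : ν.re = 1 / 2 := by
    rw [hν]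
    simp [Complex.sub_re, hμre]
  intro n
  induction n with
  | zero =>
    intro X hX
    have hAX : 0 < A - X := by linarith [hX.2]
    have hg : Complex.Gamma (1 - ν) ≠ 0 :=
      Complex.Gamma_ne_zero_of_re_pos (by rw [Complex.sub_re, Complex.one_re, hνre]; norm_num)
    rw [h0 X hX, hhp X hX, exp_aff κ Cp (Complex.I * (lam : ℂ)) _ hAX, ← hμ, ← hE]
    simp only [Nat.cast_zero, Nat.factorial_zero, Nat.cast_one, mul_zero, zero_add,
      pow_zero, one_mul, mul_one, Nat.cast_ofNat, Nat.mul_zero]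
    rw [div_self hg, mul_one]
  | succ n ih =>
    intro X hX
    obtain ⟨hX0, hXA⟩ := hX
    have hAX : 0 < A - X := by linarith
    have hre1 : ((n : ℂ) + 1 - ν).re = (n : ℝ) + 1 - 1 / 2 := by
      simp [Complex.sub_re, Complex.add_re, hνre]
    have hg1 : ((n : ℂ) + 1 - ν) ≠ 0 := by
      intro h
      apply_fun Complex.re at h
      rw [hre1] at h
      simp at h
      have : (0:ℝ) ≤ (n:ℝ) := Nat.cast_nonneg n
      linarith
    have hg2 : Complex.Gamma ((n : ℂ) + 1 - ν) ≠ 0 :=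
      Complex.Gamma_ne_zero_of_re_pos (by
        rw [hre1]
        have : (0:ℝ) ≤ (n:ℝ) := Nat.cast_nonneg n
        linarith)
    set cn : ℂ := E * (Complex.Gamma (1 - ν) /
      (2 ^ (2 * n) * Complex.Gamma ((n : ℂ) + 1 - ν) * (n.factorial : ℂ))) with hcn
    set s : ℂ := 2 * (n : ℂ) + 2 * μ with hs
    set t : ℂ := 2 * (n : ℂ) + 1 with ht
    clear_value cn s t
    have hsre : s.re = 2 * (n : ℝ) := by
      rw [hs]
      simp [Complex.add_re, Complex.mul_re, hμre]
    have htre : t.re = 2 * (n : ℝ) + 1 := by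
      rw [ht]
      simp [Complex.add_re, Complex.mul_re]
    have hn0 : (0:ℝ) ≤ (n:ℝ) := Nat.cast_nonneg n
    have hs1 : s + 1 ≠ 0 := by
      intro h
      apply_fun Complex.re at h
      simp [Complex.add_re, hsre] at h
      linarith
    have ht1 : t + 1 ≠ 0 := by
      intro h
      apply_fun Complex.re at h
      simp [Complex.add_re, htre] at h
      linarith
    have hinner : ∀ Y ∈ Ioo X A,
        (∫ T in Ioo Y A, Complex.exp (-2 * Complex.I * (lam : ℂ) * (hplus Y : ℂ)) *
          Complex.exp (Complex.I * (lam : ℂ) * (hplus T : ℂ)) * ap n T)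
        = (Complex.exp ((-2 * Complex.I * (lam : ℂ)) * (Cp : ℂ)) * E * cn / (s + 1)) *
            ((A - Y : ℝ) : ℂ) ^ t := by
      intro Y hY
      have hY0 : 0 < Y := lt_trans hX0 hY.1
      have hYA : Y < A := hY.2
      have hAY : 0 < A - Y := by linarith
      have step1 : ∀ T ∈ Ioo Y A,
          Complex.exp (-2 * Complex.I * (lam : ℂ) * (hplus Y : ℂ)) *
            Complex.exp (Complex.I * (lam : ℂ) * (hplus T : ℂ)) * ap n T
          = (Complex.exp (-2 * Complex.I * (lam : ℂ) * (hplus Y : ℂ)) * (E * cn)) *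
              ((A - T : ℝ) : ℂ) ^ s := by
        intro T hT
        have hT' : T ∈ Ioo 0 A := ⟨lt_trans hY0 hT.1, hT.2⟩
        have hAT : 0 < A - T := by linarith [hT.2]
        have hpow : ((A - T : ℝ) : ℂ) ^ s =
            ((A - T : ℝ) : ℂ) ^ μ * ((A - T : ℝ) : ℂ) ^ ((2 * (n : ℂ)) + μ) := by
          rw [← Complex.cpow_add _ _ (by exact_mod_cast hAT.ne')]
          congr 1
          rw [hs]
          ring
        rw [ih T hT', hhp T hT', exp_aff κ Cp (Complex.I * (lam : ℂ)) _ hAT, ← hμ, ← hE,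
          hpow, hcn]
        ring
      rw [setIntegral_congr_fun measurableSet_Ioo (fun T hT => step1 T hT),
        integral_const_mul, key_integral A Y hYA s (by rw [hsre]; positivity),
        hhp Y ⟨hY0, hYA⟩, exp_aff κ Cp (-2 * Complex.I * (lam : ℂ)) _ hAY]
      have hpow2 : ((A - Y : ℝ) : ℂ) ^ ((-2 * Complex.I * (lam : ℂ)) / (κ : ℂ)) *
          ((A - Y : ℝ) : ℂ) ^ (s + 1) = ((A - Y : ℝ) : ℂ) ^ t := by
        rw [← Complex.cpow_add _ _ (by exact_mod_cast hAY.ne')]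
        congr 1
        rw [ht, hs, hμ]
        ring
      rw [← hpow2]
      ring
    rw [hrec n X ⟨hX0, hXA⟩,
      setIntegral_congr_fun measurableSet_Ioo (fun Y hY => hinner Y hY),
      integral_const_mul, key_integral A X hXA t (by rw [htre]; positivity),
      hhp X ⟨hX0, hXA⟩, exp_aff κ Cp (Complex.I * (lam : ℂ)) _ hAX, ← hμ, ← hE]
    have hpow3 : ((A - X : ℝ) : ℂ) ^ μ * ((A - X : ℝ) : ℂ) ^ (t + 1) =
        ((A - X : ℝ) : ℂ) ^ ((2 * ((n : ℂ) + 1)) + μ) := by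
      rw [← Complex.cpow_add _ _ (by exact_mod_cast hAX.ne')]
      congr 1
      rw [ht]
      ring
    have hEne : E ≠ 0 := by rw [hE]; exact Complex.exp_ne_zero _
    have hc2 : Complex.exp (-2 * Complex.I * (lam : ℂ) * (Cp : ℂ)) = E⁻¹ * E⁻¹ := by
      rw [hE, ← Complex.exp_neg, ← Complex.exp_add]
      congr 1
      ring
    have hfac : ((n + 1).factorial : ℂ) = ((n : ℂ) + 1) * (n.factorial : ℂ) := by
      push_cast [Nat.factorial_succ]
      ring
    have hGam : Complex.Gamma (((n : ℕ) + 1 : ℕ) + 1 - ν) =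
        ((n : ℂ) + 1 - ν) * Complex.Gamma ((n : ℂ) + 1 - ν) := by
      have h : (((n : ℕ) + 1 : ℕ) : ℂ) + 1 - ν = ((n : ℂ) + 1 - ν) + 1 := by
        push_cast
        ring
      rw [h, Complex.Gamma_add_one _ hg1]
    have hexp_eq : ((2 * ((n:ℕ) + 1 : ℕ) : ℂ)) + μ = (2 * ((n : ℂ) + 1)) + μ := by
      push_cast
      ring
    have hsval : s + 1 = 2 * ((n : ℂ) + 1 - ν) := by
      rw [hs, hν]
      ring
    have htval : t + 1 = 2 * ((n : ℂ) + 1) := by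
      rw [ht]
      ring
    have hfn : ((n.factorial : ℂ)) ≠ 0 := by
      exact_mod_cast Nat.factorial_ne_zero n
    have hn1 : ((n : ℂ) + 1) ≠ 0 := by
      have h := Nat.cast_ne_zero (R := ℂ).mpr (Nat.succ_ne_zero n)
      push_cast at h
      exact h
    have h2n : (2 : ℂ) ^ (2 * n) ≠ 0 := pow_ne_zero _ two_ne_zero
    have hpw : (2 : ℂ) ^ (2 * ((n:ℕ) + 1)) = 2 ^ (2 * n) * 4 := by
      rw [show 2 * ((n:ℕ) + 1) = 2 * n + 2 by ring, pow_add]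
      norm_num
    have hconst : Complex.exp (-2 * Complex.I * (lam : ℂ) * (Cp : ℂ)) * E * cn / (s + 1) /
          (t + 1) * E =
        E * (Complex.Gamma (1 - ν) /
          (2 ^ (2 * ((n:ℕ) + 1)) * Complex.Gamma (((n : ℕ) + 1 : ℕ) + 1 - ν) *
            ((n + 1).factorial : ℂ))) := by
      rw [hc2, hcn, hGam, hfac, hpw, hsval, htval]
      have hg2' := hg2
      generalize hGn : Complex.Gamma ((n : ℂ) + 1 - ν) = Gn at hg2' ⊢
      generalize hG1 : Complex.Gamma (1 - ν) = G1
      generalize hnu : (n : ℂ) + 1 - ν = w at hg1 ⊢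
      have hn1' := hn1
      generalize hm : (n : ℂ) + 1 = m at hn1' ⊢
      field_simp
      ring
    rw [hexp_eq]
    linear_combination (Complex.exp (-2 * Complex.I * (lam : ℂ) * (Cp : ℂ)) * E * cn /
        (s + 1) / (t + 1) * E) * hpow3 +
      (((A - X : ℝ) : ℂ) ^ ((2 * ((n : ℂ) + 1)) + μ)) * hconst
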